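/- The group ℤ/2ℤ × ℤ/2ℤ does not admit a semi-regular poset representation with three orbits: there is no partial order P and group isomorphism from ℤ/2ℤ × ℤ/2ℤ onto the group of order automorphisms of P such that the induced action on P is free and has exactly three orbits. -/

import Mathlib

universe u v

/-- A group `G` admits a semi-regular poset representation with exactly `k` orbits:
there is a partial order `P` and a group isomorphism `ρ` from `G` onto the group of
order automorphisms of `P` such that the induced action is free, and there are `k`
orbit representatives such that every point lies in the orbit of exactly one of them. -/
def HasSemiRegularPosetRep (G : Type u) [Group G] (k : ℕ) : Prop :=
  ∃ (P : Type v) (_ : PartialOrder P) (ρ : G ≃* (P ≃o P)),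
    (∀ (g : G) (p : P), ρ g p = p → g = 1) ∧
    ∃ reps : Fin k → P, ∀ p : P, ∃! i : Fin k, ∃ g : G, ρ g (reps i) = p

namespace KleinAux

set_option synthInstance.maxSize 5000
set_option synthInstance.maxHeartbeats 1000000
set_option maxHeartbeats 1000000

abbrev G2 : Type := Multiplicative (ZMod 2 × ZMod 2)

def swf (w g : G2) : G2 := if g = 1 then w else if g = w then 1 else g

lemma g2_sq : ∀ g : G2, g * g = 1 := by decide
lemma g2_inv : ∀ g : G2, g⁻¹ = g := by decide
lemma swf_invol : ∀ w g : G2, swf w (swf w g) = g := by decide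
lemma swf_one : ∀ w : G2, swf w 1 = w := by decide
lemma swf_fix : ∀ w : G2, ∃ c, c ≠ 1 ∧ swf w c = c := by decide

def z0 : G2 := Multiplicative.ofAdd (1, 0)
def wsel (w : G2) : G2 := if w = 1 then z0 else w
lemma wsel_ne : ∀ w : G2, wsel w ≠ 1 := by decide

lemma argswap : ∀ p q : G2, p⁻¹ * q = q⁻¹ * p := by decide

lemma oddarith : ∀ w x a b : G2,
    ((swf w a)⁻¹ * (x * swf w (x * b)) = x) ↔ (a⁻¹ * b = x) := by decide

lemma oddkey : ∀ x1 x2 x3 a b : G2,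
    ((x1 * swf (wsel (x1 * x2 * x3)) (x1 * a))⁻¹ *
      (x2 * swf (wsel (x1 * x2 * x3)) (x2 * b)) = x3) ↔ (a⁻¹ * b = x3) := by decide

lemma stabarith : ∀ u x1 x2 a b : G2, ∃ ε : G2, (ε = 1 ∨ ε = u) ∧
    ((x1 * swf u (x1 * a))⁻¹ * (x2 * swf u (x2 * b)) = (a⁻¹ * b) * ε) := by decide

lemma cover4 : ∀ z y u g : G2, u ≠ 1 ∧ y ≠ z ∧ y ≠ z * u →
    (g = z ∨ g = z * u ∨ g = y ∨ g = y * u) := by decide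

lemma pairlem : ∀ p z α β : G2, α ≠ 1 ∧ α ≠ β ∧
    (p = z ∨ p = z * β) ∧ (p * α = z ∨ p * α = z * β) → False := by decide

lemma quaddec : ∀ z1 z2 u1 u2 x : G2, u1 ≠ 1 ∧ u2 ≠ 1 ∧ u1 ≠ u2 ∧
    z2 * z1 ≠ x ∧ z2 * (z1 * u1) ≠ x ∧ (z2 * u2) * z1 ≠ x ∧
    (z2 * u2) * (z1 * u1) ≠ x → False := by decide

lemma quaddec2 : ∀ z1 z2 u1 u2 x : G2, u1 ≠ 1 ∧ u2 ≠ 1 ∧ u1 ≠ u2 ∧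
    z1 * z2 ≠ x ∧ (z1 * u1) * z2 ≠ x ∧ z1 * (z2 * u2) ≠ x ∧
    (z1 * u1) * (z2 * u2) ≠ x → False := by decide

lemma third_elt : ∀ a b c : G2, a ≠ 1 ∧ b ≠ 1 ∧ c ≠ 1 ∧ a ≠ b ∧ a ≠ c ∧ b ≠ c →
    a * b = c := by decide

lemma exists_ne : ∀ x : G2, ∃ y : G2, y ≠ x := by decide

lemma odd_or_stab_bool : ∀ f : G2 → Bool,
    (∃ x : G2, (∀ g, f g = true ↔ g = x) ∨ (∀ g, f g = true ↔ g ≠ x)) ∨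
    (∃ u : G2, u ≠ 1 ∧ ∀ g, f g = f (g * u)) := by decide

section Abstract

variable {P : Type v} [PartialOrder P] (ρ : G2 ≃* (P ≃o P)) (reps : Fin 3 → P)

def Dd (i j : Fin 3) (g : G2) : Prop := reps i < ρ g (reps j)

def Cc (i j : Fin 3) (g : G2) : Prop := Dd ρ reps i j g ∨ Dd ρ reps j i g

lemma rho_mul (a b : G2) (p : P) : ρ (a * b) p = ρ a (ρ b p) := by
  rw [map_mul]; rfl

lemma rho_one (p : P) : ρ 1 p = p := by rw [map_one]; rfl

lemma lt_iff (i j : Fin 3) (a b : G2) :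
    ρ a (reps i) < ρ b (reps j) ↔ Dd ρ reps i j (a⁻¹ * b) := by
  have h : ρ b (reps j) = ρ a (ρ (a⁻¹ * b) (reps j)) := by
    rw [← rho_mul, mul_inv_cancel_left]
  rw [h]
  show ρ a (reps i) < ρ a (ρ (a⁻¹ * b) (reps j)) ↔ reps i < ρ (a⁻¹ * b) (reps j)
  exact (ρ a).lt_iff_lt

lemma Dd_diag (i : Fin 3) (g : G2) : ¬ Dd ρ reps i i g := by
  intro h
  by_cases hg : g = 1
  · subst hg; exact absurd h (by simp [Dd, rho_one])
  · have h2 : ρ g (reps i) < ρ g (ρ g (reps i)) := (ρ g).strictMono h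
    rw [← rho_mul, g2_sq, rho_one] at h2
    exact lt_irrefl _ (lt_trans h h2)

lemma Dd_trans {i j k : Fin 3} {a b : G2} (h1 : Dd ρ reps i j a) (h2 : Dd ρ reps j k b) :
    Dd ρ reps i k (a * b) := by
  have h3 : ρ a (reps j) < ρ a (ρ b (reps k)) := (ρ a).strictMono h2
  rw [← rho_mul] at h3
  exact lt_trans h1 h3

lemma Dd_onedir {i j : Fin 3} {a b : G2} (h1 : Dd ρ reps i j a) (h2 : Dd ρ reps j i b) :
    False := Dd_diag ρ reps i (a * b) (Dd_trans ρ reps h1 h2)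

lemma Cc_symm (i j : Fin 3) (g : G2) : Cc ρ reps i j g ↔ Cc ρ reps j i g := or_comm

lemma Cc_diag (i : Fin 3) (g : G2) : ¬ Cc ρ reps i i g := by
  rintro (h | h) <;> exact Dd_diag ρ reps i g h

lemma inj_aux (hfree : ∀ (g : G2) (p : P), ρ g p = p → g = 1)
    (huniq : ∀ p : P, ∃! i : Fin 3, ∃ g : G2, ρ g (reps i) = p)
    {i j : Fin 3} {a b : G2} (h : ρ a (reps i) = ρ b (reps j)) :
    i = j ∧ a = b := by
  obtain ⟨i0, _, hun⟩ := huniq (ρ b (reps j))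
  have hi : i = j := by
    have h1 : i = i0 := hun i ⟨a, h⟩
    have h2 : j = i0 := hun j ⟨b, rfl⟩
    rw [h1, h2]
  subst hi
  refine ⟨rfl, ?_⟩
  have h2 : ρ (b⁻¹ * a) (reps i) = reps i := by
    rw [rho_mul, h, ← rho_mul, inv_mul_cancel, rho_one]
  have := hfree _ _ h2
  have : b * (b⁻¹ * a) = b * 1 := by rw [this]
  rwa [mul_inv_cancel_left, mul_one] at this

lemma block (hfree : ∀ (g : G2) (p : P), ρ g p = p → g = 1)
    (huniq : ∀ p : P, ∃! i : Fin 3, ∃ g : G2, ρ g (reps i) = p)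
    (s : Fin 3 → Equiv.Perm G2)
    (hC : ∀ (i j : Fin 3) (a b : G2),
      Cc ρ reps i j (a⁻¹ * b) ↔ Cc ρ reps i j ((s i a)⁻¹ * (s j b))) :
    ∃ g : G2, ∀ (i : Fin 3) (a : G2), s i a = g * a := by
  classical
  have hD : ∀ (i j : Fin 3) (a b : G2),
      Dd ρ reps i j (a⁻¹ * b) ↔ Dd ρ reps i j ((s i a)⁻¹ * (s j b)) := by
    intro i j a b
    by_cases hne : ∃ c, Dd ρ reps i j c
    · obtain ⟨c, hc⟩ := hne
      have hemp : ∀ d, ¬ Dd ρ reps j i d := fun d hd => Dd_onedir ρ reps hc hd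
      have hCeq : ∀ g, Cc ρ reps i j g ↔ Dd ρ reps i j g := fun g =>
        ⟨fun h => h.resolve_right (hemp g), Or.inl⟩
      rw [← hCeq, ← hCeq]
      exact hC i j a b
    · push_neg at hne
      exact iff_of_false (hne _) (hne _)
  set f : Fin 3 × G2 → P := fun z => ρ z.2 (reps z.1) with hf
  have hfbij : Function.Bijective f := by
    constructor
    · rintro ⟨i, a⟩ ⟨j, b⟩ h
      obtain ⟨h1, h2⟩ := inj_aux ρ reps hfree huniq h
      exact Prod.ext h1 h2
    · intro p
      obtain ⟨i, hi, -⟩ := huniq p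
      obtain ⟨g, hg⟩ := hi
      exact ⟨(i, g), hg⟩
  set E := Equiv.ofBijective f hfbij with hE
  have hEapp : ∀ (i : Fin 3) (a : G2), E (i, a) = ρ a (reps i) := fun i a => rfl
  set m : Fin 3 × G2 ≃ Fin 3 × G2 :=
    { toFun := fun z => (z.1, s z.1 z.2)
      invFun := fun z => (z.1, (s z.1).symm z.2)
      left_inv := fun z => by simp
      right_inv := fun z => by simp } with hm
  set ψ : P ≃ P := (E.symm.trans m).trans E with hψdef
  have hψ : ∀ (i : Fin 3) (a : G2), ψ (E (i, a)) = E (i, s i a) := by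
    intro i a
    simp only [hψdef, Equiv.trans_apply, Equiv.symm_apply_apply]
    rfl
  have hlt : ∀ (i j : Fin 3) (a b : G2),
      E (i, a) < E (j, b) ↔ Dd ρ reps i j (a⁻¹ * b) := by
    intro i j a b
    rw [hEapp, hEapp]
    exact lt_iff ρ reps i j a b
  have heq : ∀ (i j : Fin 3) (a b : G2),
      E (i, a) = E (j, b) ↔ (i = j ∧ a = b) := by
    intro i j a b
    constructor
    · intro h
      rw [hEapp, hEapp] at h
      exact inj_aux ρ reps hfree huniq h
    · rintro ⟨rfl, rfl⟩; rfl
  have key : ∀ x y : P, ψ x ≤ ψ y ↔ x ≤ y := by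
    intro x y
    obtain ⟨⟨i, a⟩, rfl⟩ := E.surjective x
    obtain ⟨⟨j, b⟩, rfl⟩ := E.surjective y
    rw [hψ, hψ, le_iff_lt_or_eq, le_iff_lt_or_eq, hlt, hlt, heq, heq]
    constructor
    · rintro (h | ⟨rfl, h⟩)
      · exact Or.inl ((hD i j a b).2 h)
      · exact Or.inr ⟨rfl, (s i).injective h⟩
    · rintro (h | ⟨rfl, rfl⟩)
      · exact Or.inl ((hD i j a b).1 h)
      · exact Or.inr ⟨rfl, rfl⟩
  set φ : P ≃o P := { toEquiv := ψ, map_rel_iff' := fun {x y} => key x y } with hφ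
  obtain ⟨g, hg⟩ := ρ.surjective φ
  refine ⟨g, fun i a => ?_⟩
  have h1 : φ (E (i, a)) = E (i, s i a) := hψ i a
  have h2 : φ (E (i, a)) = E (i, g * a) := by
    rw [← hg, hEapp, hEapp, rho_mul]
  have := (heq i i (s i a) (g * a)).1 (h1.symm.trans h2)
  exact this.2

lemma translation_aux (hfree : ∀ (g : G2) (p : P), ρ g p = p → g = 1)
    (huniq : ∀ p : P, ∃! i : Fin 3, ∃ g : G2, ρ g (reps i) = p)
    (h : Fin 3 → G2)
    (hCinv : ∀ (i j : Fin 3) (g : G2), Cc ρ reps i j g ↔ Cc ρ reps i j (g * (h i * h j))) :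
    ∀ i j, h i = h j := by
  have hC : ∀ (i j : Fin 3) (a b : G2),
      Cc ρ reps i j (a⁻¹ * b) ↔
        Cc ρ reps i j ((Equiv.mulLeft (h i) a)⁻¹ * (Equiv.mulLeft (h j) b)) := by
    intro i j a b
    have harg : ((Equiv.mulLeft (h i) a)⁻¹ * (Equiv.mulLeft (h j) b) : G2)
        = (a⁻¹ * b) * (h i * h j) := by
      simp only [Equiv.coe_mulLeft, g2_inv]
      ac_rfl
    rw [harg]
    exact hCinv i j (a⁻¹ * b)
  obtain ⟨g, hg⟩ := block ρ reps hfree huniq (fun i => Equiv.mulLeft (h i)) hC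
  intro i j
  have hi := hg i 1
  have hj := hg j 1
  simp only [Equiv.coe_mulLeft, mul_one] at hi hj
  rw [hi, hj]

def swP (w : G2) : Equiv.Perm G2 := ⟨swf w, swf w, swf_invol w, swf_invol w⟩

lemma tau_aux (hfree : ∀ (g : G2) (p : P), ρ g p = p → g = 1)
    (huniq : ∀ p : P, ∃! i : Fin 3, ∃ g : G2, ρ g (reps i) = p)
    (w' : G2) (hw : w' ≠ 1) (t : Fin 3 → G2)
    (hC : ∀ (i j : Fin 3) (a b : G2),
      Cc ρ reps i j (a⁻¹ * b) ↔
      Cc ρ reps i j ((t i * swf w' (t i * a))⁻¹ * (t j * swf w' (t j * b)))) : False := by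
  set s : Fin 3 → Equiv.Perm G2 :=
    fun i => ((Equiv.mulLeft (t i)).trans (swP w')).trans (Equiv.mulLeft (t i)) with hs
  have hsa : ∀ i a, s i a = t i * swf w' (t i * a) := fun i a => rfl
  obtain ⟨g, hg⟩ := block ρ reps hfree huniq s
    (by intro i j a b; rw [hsa, hsa]; exact hC i j a b)
  have h1 := hg 0 (t 0)
  rw [hsa, g2_sq, swf_one] at h1
  have hgw : w' = g := by
    have h1' : w' * t 0 = g * t 0 := by rw [← h1]; exact mul_comm _ _
    exact mul_right_cancel h1'
  obtain ⟨c, hc1, hc2⟩ := swf_fix w'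
  have h2 := hg 0 (t 0 * c)
  rw [hsa, ← mul_assoc, g2_sq, one_mul, hc2] at h2
  have hg1 : g = 1 := mul_eq_right.mp h2.symm
  rw [hg1] at hgw
  exact hw hgw

def OddX (i j : Fin 3) (x : G2) : Prop :=
  (∀ g, Cc ρ reps i j g ↔ g = x) ∨ (∀ g, Cc ρ reps i j g ↔ g ≠ x)

lemma fin3_cases : ∀ (m i j k : Fin 3), m ≠ i → m ≠ j → i ≠ j →
    (k = m ∨ k = i ∨ k = j) := by decide

lemma witness_core (hfree : ∀ (g : G2) (p : P), ρ g p = p → g = 1)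
    (huniq : ∀ p : P, ∃! i : Fin 3, ∃ g : G2, ρ g (reps i) = p)
    (m i j : Fin 3) (hmi : m ≠ i) (hmj : m ≠ j) (hij : i ≠ j)
    (x1 x2 w' : G2) (hw : w' ≠ 1)
    (h1 : OddX ρ reps m i x1) (h2 : OddX ρ reps m j x2)
    (hq : ∀ a b : G2, Cc ρ reps i j (a⁻¹ * b) ↔
      Cc ρ reps i j ((x1 * swf w' (x1 * a))⁻¹ * (x2 * swf w' (x2 * b)))) : False := by
  set t : Fin 3 → G2 := fun k => if k = m then 1 else if k = i then x1 else x2 with ht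
  have tm : t m = 1 := by simp [ht]
  have ti : t i = x1 := by simp [ht, Ne.symm hmi]
  have tj : t j = x2 := by simp [ht, Ne.symm hmj, Ne.symm hij]
  have main : ∀ (p q : Fin 3),
      (∀ a b : G2, Cc ρ reps p q (a⁻¹ * b) ↔
        Cc ρ reps p q ((t p * swf w' (t p * a))⁻¹ * (t q * swf w' (t q * b)))) →
      (∀ a b : G2, Cc ρ reps q p (a⁻¹ * b) ↔
        Cc ρ reps q p ((t q * swf w' (t q * a))⁻¹ * (t p * swf w' (t p * b)))) := by
    intro p q hpq a b
    rw [Cc_symm ρ reps q p, Cc_symm ρ reps q p, argswap a b,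
      argswap (t q * swf w' (t q * a)) (t p * swf w' (t p * b))]
    exact hpq b a
  have hmi_case : ∀ a b : G2, Cc ρ reps m i (a⁻¹ * b) ↔
      Cc ρ reps m i ((t m * swf w' (t m * a))⁻¹ * (t i * swf w' (t i * b))) := by
    intro a b
    rw [tm, ti, one_mul, one_mul]
    rcases h1 with hc | hc
    · rw [hc, hc]; exact (oddarith w' x1 a b).symm
    · rw [hc, hc]; exact not_congr (oddarith w' x1 a b).symm
  have hmj_case : ∀ a b : G2, Cc ρ reps m j (a⁻¹ * b) ↔
      Cc ρ reps m j ((t m * swf w' (t m * a))⁻¹ * (t j * swf w' (t j * b))) := by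
    intro a b
    rw [tm, tj, one_mul, one_mul]
    rcases h2 with hc | hc
    · rw [hc, hc]; exact (oddarith w' x2 a b).symm
    · rw [hc, hc]; exact not_congr (oddarith w' x2 a b).symm
  have hij_case : ∀ a b : G2, Cc ρ reps i j (a⁻¹ * b) ↔
      Cc ρ reps i j ((t i * swf w' (t i * a))⁻¹ * (t j * swf w' (t j * b))) := by
    intro a b
    rw [ti, tj]
    exact hq a b
  apply tau_aux ρ reps hfree huniq w' hw t
  intro k l a b
  rcases fin3_cases m i j k hmi hmj hij with hk | hk | hk <;>
    rcases fin3_cases m i j l hmi hmj hij with hl | hl | hl <;>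
    rw [hk, hl]
  · exact iff_of_false (Cc_diag ρ reps _ _) (Cc_diag ρ reps _ _)
  · exact hmi_case a b
  · exact hmj_case a b
  · exact main m i hmi_case a b
  · exact iff_of_false (Cc_diag ρ reps _ _) (Cc_diag ρ reps _ _)
  · exact hij_case a b
  · exact main m j hmj_case a b
  · exact main i j hij_case a b
  · exact iff_of_false (Cc_diag ρ reps _ _) (Cc_diag ρ reps _ _)

lemma witness_odd (hfree : ∀ (g : G2) (p : P), ρ g p = p → g = 1)
    (huniq : ∀ p : P, ∃! i : Fin 3, ∃ g : G2, ρ g (reps i) = p)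
    (m i j : Fin 3) (hmi : m ≠ i) (hmj : m ≠ j) (hij : i ≠ j)
    (x1 x2 x3 : G2)
    (h1 : OddX ρ reps m i x1) (h2 : OddX ρ reps m j x2) (h3 : OddX ρ reps i j x3) :
    False := by
  apply witness_core ρ reps hfree huniq m i j hmi hmj hij x1 x2
    (wsel (x1 * x2 * x3)) (wsel_ne _) h1 h2
  intro a b
  rcases h3 with hc | hc
  · rw [hc, hc]; exact (oddkey x1 x2 x3 a b).symm
  · rw [hc, hc]; exact not_congr (oddkey x1 x2 x3 a b).symm

lemma witness_stab (hfree : ∀ (g : G2) (p : P), ρ g p = p → g = 1)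
    (huniq : ∀ p : P, ∃! i : Fin 3, ∃ g : G2, ρ g (reps i) = p)
    (m i j : Fin 3) (hmi : m ≠ i) (hmj : m ≠ j) (hij : i ≠ j)
    (x1 x2 u : G2) (hu : u ≠ 1)
    (h1 : OddX ρ reps m i x1) (h2 : OddX ρ reps m j x2)
    (hinv : ∀ g, Cc ρ reps i j g ↔ Cc ρ reps i j (g * u)) : False := by
  apply witness_core ρ reps hfree huniq m i j hmi hmj hij x1 x2 u hu h1 h2
  intro a b
  obtain ⟨ε, hε, harg⟩ := stabarith u x1 x2 a b
  rw [harg]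
  rcases hε with rfl | rfl
  · rw [mul_one]
  · exact hinv (a⁻¹ * b)

lemma gamma (c i j : Fin 3) (u1 u2 : G2) (hu1 : u1 ≠ 1) (hu2 : u2 ≠ 1) (h12 : u1 ≠ u2)
    (hinv1 : ∀ g, Cc ρ reps c i g ↔ Cc ρ reps c i (g * u1))
    (hninv1 : ¬ ∀ g, Cc ρ reps c i g ↔ Cc ρ reps c i (g * u2))
    (hinv2 : ∀ g, Cc ρ reps c j g ↔ Cc ρ reps c j (g * u2))
    (hninv2 : ¬ ∀ g, Cc ρ reps c j g ↔ Cc ρ reps c j (g * u1))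
    (x : G2) (hodd : OddX ρ reps i j x) : False := by
  classical
  have hne1 : ∃ z, Cc ρ reps c i z := by
    by_contra hn
    push_neg at hn
    exact hninv1 (fun g => iff_of_false (hn g) (hn _))
  obtain ⟨z1, hz1⟩ := hne1
  have hz1u : Cc ρ reps c i (z1 * u1) := (hinv1 z1).1 hz1
  have hC1 : ∀ y, Cc ρ reps c i y → y = z1 ∨ y = z1 * u1 := by
    intro y hy
    by_contra hcon
    push_neg at hcon
    have hall : ∀ g, Cc ρ reps c i g := by
      intro g
      rcases cover4 z1 y u1 g ⟨hu1, hcon.1, hcon.2⟩ with rfl | rfl | rfl | rfl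
      · exact hz1
      · exact hz1u
      · exact hy
      · exact (hinv1 y).1 hy
    exact hninv1 (fun g => iff_of_true (hall g) (hall _))
  have hne2 : ∃ z, Cc ρ reps c j z := by
    by_contra hn
    push_neg at hn
    exact hninv2 (fun g => iff_of_false (hn g) (hn _))
  obtain ⟨z2, hz2⟩ := hne2
  have hz2u : Cc ρ reps c j (z2 * u2) := (hinv2 z2).1 hz2
  have hC2 : ∀ y, Cc ρ reps c j y → y = z2 ∨ y = z2 * u2 := by
    intro y hy
    by_contra hcon
    push_neg at hcon
    have hall : ∀ g, Cc ρ reps c j g := by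
      intro g
      rcases cover4 z2 y u2 g ⟨hu2, hcon.1, hcon.2⟩ with rfl | rfl | rfl | rfl
      · exact hz2
      · exact hz2u
      · exact hy
      · exact (hinv2 y).1 hy
    exact hninv2 (fun g => iff_of_true (hall g) (hall _))
  have hne3 : ∃ b, Cc ρ reps i j b := by
    rcases hodd with hc | hc
    · exact ⟨x, (hc x).2 rfl⟩
    · obtain ⟨y, hy⟩ := exists_ne x
      exact ⟨y, (hc y).2 hy⟩
  obtain ⟨b, hb⟩ := hne3
  have dir : ∀ p q : Fin 3, (∀ g, Cc ρ reps p q g → Dd ρ reps p q g) ∨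
      (∀ g, Cc ρ reps p q g → Dd ρ reps q p g) := by
    intro p q
    by_cases hx : ∃ cc, Dd ρ reps p q cc
    · obtain ⟨cc, hcc⟩ := hx
      left; intro g hg
      rcases hg with h | h
      · exact h
      · exact (Dd_onedir ρ reps hcc h).elim
    · right; intro g hg
      rcases hg with h | h
      · exact absurd ⟨g, h⟩ hx
      · exact h
  have conc2 : ∀ pz : G2, Cc ρ reps c j pz → Cc ρ reps c j (pz * u1) → False := by
    intro pz hp hpu
    exact pairlem pz z2 u1 u2 ⟨hu1, h12, hC2 _ hp, hC2 _ hpu⟩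
  have conc1 : ∀ pz : G2, Cc ρ reps c i pz → Cc ρ reps c i (pz * u2) → False := by
    intro pz hp hpu
    exact pairlem pz z1 u2 u1 ⟨hu2, Ne.symm h12, hC1 _ hp, hC1 _ hpu⟩
  rcases dir c i with d1 | d1 <;> rcases dir i j with d3 | d3
  · -- chain c→i→j
    have p1 : Dd ρ reps c j (z1 * b) := Dd_trans ρ reps (d1 _ hz1) (d3 _ hb)
    have p2 : Dd ρ reps c j (z1 * u1 * b) := Dd_trans ρ reps (d1 _ hz1u) (d3 _ hb)
    apply conc2 (z1 * b) (Or.inl p1)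
    have harr : z1 * b * u1 = z1 * u1 * b := by ac_rfl
    rw [harr]
    exact Or.inl p2
  · -- d1 : c→i, d3 : j→i
    rcases dir c j with d2 | d2
    · -- chain c→j→i
      have p1 : Dd ρ reps c i (z2 * b) := Dd_trans ρ reps (d2 _ hz2) (d3 _ hb)
      have p2 : Dd ρ reps c i (z2 * u2 * b) := Dd_trans ρ reps (d2 _ hz2u) (d3 _ hb)
      apply conc1 (z2 * b) (Or.inl p1)
      have harr : z2 * b * u2 = z2 * u2 * b := by ac_rfl
      rw [harr]
      exact Or.inl p2
    · -- chain j→c→i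
      rcases hodd with hc | hc
      · have e1 : z2 * z1 = x := (hc _).1 (Or.inr (Dd_trans ρ reps (d2 _ hz2) (d1 _ hz1)))
        have e2 : z2 * (z1 * u1) = x :=
          (hc _).1 (Or.inr (Dd_trans ρ reps (d2 _ hz2) (d1 _ hz1u)))
        have : z1 = z1 * u1 := mul_left_cancel (e1.trans e2.symm)
        exact hu1 (left_eq_mul.mp this)
      · exact quaddec z1 z2 u1 u2 x ⟨hu1, hu2, h12,
          (hc _).1 (Or.inr (Dd_trans ρ reps (d2 _ hz2) (d1 _ hz1))),
          (hc _).1 (Or.inr (Dd_trans ρ reps (d2 _ hz2) (d1 _ hz1u))),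
          (hc _).1 (Or.inr (Dd_trans ρ reps (d2 _ hz2u) (d1 _ hz1))),
          (hc _).1 (Or.inr (Dd_trans ρ reps (d2 _ hz2u) (d1 _ hz1u)))⟩
  · -- d1 : i→c, d3 : i→j
    rcases dir c j with d2 | d2
    · -- chain i→c→j
      rcases hodd with hc | hc
      · have e1 : z1 * z2 = x := (hc _).1 (Or.inl (Dd_trans ρ reps (d1 _ hz1) (d2 _ hz2)))
        have e2 : z1 * u1 * z2 = x :=
          (hc _).1 (Or.inl (Dd_trans ρ reps (d1 _ hz1u) (d2 _ hz2)))
        have : z1 = z1 * u1 := mul_right_cancel (e1.trans e2.symm)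
        exact hu1 (left_eq_mul.mp this)
      · exact quaddec2 z1 z2 u1 u2 x ⟨hu1, hu2, h12,
          (hc _).1 (Or.inl (Dd_trans ρ reps (d1 _ hz1) (d2 _ hz2))),
          (hc _).1 (Or.inl (Dd_trans ρ reps (d1 _ hz1u) (d2 _ hz2))),
          (hc _).1 (Or.inl (Dd_trans ρ reps (d1 _ hz1) (d2 _ hz2u))),
          (hc _).1 (Or.inl (Dd_trans ρ reps (d1 _ hz1u) (d2 _ hz2u)))⟩
    · -- chain i→j→c
      have p1 : Dd ρ reps i c (b * z2) := Dd_trans ρ reps (d3 _ hb) (d2 _ hz2)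
      have p2 : Dd ρ reps i c (b * (z2 * u2)) := Dd_trans ρ reps (d3 _ hb) (d2 _ hz2u)
      apply conc1 (b * z2) (Or.inr p1)
      have harr : b * z2 * u2 = b * (z2 * u2) := by ac_rfl
      rw [harr]
      exact Or.inr p2
  · -- d1 : i→c, d3 : j→i : chain j→i→c
    have p1 : Dd ρ reps j c (b * z1) := Dd_trans ρ reps (d3 _ hb) (d1 _ hz1)
    have p2 : Dd ρ reps j c (b * (z1 * u1)) := Dd_trans ρ reps (d3 _ hb) (d1 _ hz1u)
    apply conc2 (b * z1) (Or.inr p1)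
    have harr : b * z1 * u1 = b * (z1 * u1) := by ac_rfl
    rw [harr]
    exact Or.inr p2

lemma nt (hfree : ∀ (g : G2) (p : P), ρ g p = p → g = 1)
    (huniq : ∀ p : P, ∃! i : Fin 3, ∃ g : G2, ρ g (reps i) = p)
    (h0 h1 h2 : G2)
    (h01 : ∀ g, Cc ρ reps 0 1 g ↔ Cc ρ reps 0 1 (g * (h0 * h1)))
    (h02 : ∀ g, Cc ρ reps 0 2 g ↔ Cc ρ reps 0 2 (g * (h0 * h2)))
    (h12 : ∀ g, Cc ρ reps 1 2 g ↔ Cc ρ reps 1 2 (g * (h1 * h2))) :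
    h0 = h1 ∧ h0 = h2 := by
  have s01 : ∀ g, Cc ρ reps 1 0 g ↔ Cc ρ reps 1 0 (g * (h1 * h0)) := by
    intro g
    rw [mul_comm h1 h0, Cc_symm ρ reps 1 0, Cc_symm ρ reps 1 0]
    exact h01 g
  have s02 : ∀ g, Cc ρ reps 2 0 g ↔ Cc ρ reps 2 0 (g * (h2 * h0)) := by
    intro g
    rw [mul_comm h2 h0, Cc_symm ρ reps 2 0, Cc_symm ρ reps 2 0]
    exact h02 g
  have s12 : ∀ g, Cc ρ reps 2 1 g ↔ Cc ρ reps 2 1 (g * (h2 * h1)) := by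
    intro g
    rw [mul_comm h2 h1, Cc_symm ρ reps 2 1, Cc_symm ρ reps 2 1]
    exact h12 g
  have key := translation_aux ρ reps hfree huniq ![h0, h1, h2] ?_
  · exact ⟨key 0 1, key 0 2⟩
  intro i j g
  fin_cases i <;> fin_cases j
  · exact iff_of_false (Cc_diag ρ reps _ _) (Cc_diag ρ reps _ _)
  · exact h01 g
  · exact h02 g
  · exact s01 g
  · exact iff_of_false (Cc_diag ρ reps _ _) (Cc_diag ρ reps _ _)
  · exact h12 g
  · exact s02 g
  · exact s12 g
  · exact iff_of_false (Cc_diag ρ reps _ _) (Cc_diag ρ reps _ _)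

lemma master (hfree : ∀ (g : G2) (p : P), ρ g p = p → g = 1)
    (huniq : ∀ p : P, ∃! i : Fin 3, ∃ g : G2, ρ g (reps i) = p) : False := by
  classical
  have oos : ∀ p q : Fin 3, (∃ x, OddX ρ reps p q x) ∨
      (∃ u, u ≠ 1 ∧ ∀ g, Cc ρ reps p q g ↔ Cc ρ reps p q (g * u)) := by
    intro p q
    set f : G2 → Bool := fun g => decide (Cc ρ reps p q g) with hfdef
    have hf : ∀ g, Cc ρ reps p q g ↔ f g = true := by
      intro g
      simp only [hfdef, decide_eq_true_eq]
    rcases odd_or_stab_bool f with ⟨x, hx | hx⟩ | ⟨u, hu, hstab⟩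
    · exact Or.inl ⟨x, Or.inl (fun g => (hf g).trans (hx g))⟩
    · exact Or.inl ⟨x, Or.inr (fun g => (hf g).trans (hx g))⟩
    · refine Or.inr ⟨u, hu, fun g => ?_⟩
      rw [hf, hf, hstab g]
  have symInv : ∀ (p q : Fin 3) (u : G2),
      (∀ g, Cc ρ reps p q g ↔ Cc ρ reps p q (g * u)) →
      (∀ g, Cc ρ reps q p g ↔ Cc ρ reps q p (g * u)) := by
    intro p q u hp g
    rw [Cc_symm ρ reps q p, Cc_symm ρ reps q p]
    exact hp g
  have symOdd : ∀ (p q : Fin 3) (x : G2), OddX ρ reps p q x → OddX ρ reps q p x := by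
    intro p q x hx
    rcases hx with hc | hc
    · exact Or.inl (fun g => (Cc_symm ρ reps q p g).trans (hc g))
    · exact Or.inr (fun g => (Cc_symm ρ reps q p g).trans (hc g))
  have nt12 : ∀ u : G2, u ≠ 1 → (∀ g, Cc ρ reps 0 1 g ↔ Cc ρ reps 0 1 (g * u)) →
      (∀ g, Cc ρ reps 0 2 g ↔ Cc ρ reps 0 2 (g * u)) → False := by
    intro u hu i1 i2
    have hr := nt ρ reps hfree huniq 1 u u
      (fun g => by rw [one_mul]; exact i1 g)
      (fun g => by rw [one_mul]; exact i2 g)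
      (fun g => by rw [g2_sq, mul_one])
    exact hu hr.1.symm
  have nt13 : ∀ u : G2, u ≠ 1 → (∀ g, Cc ρ reps 0 1 g ↔ Cc ρ reps 0 1 (g * u)) →
      (∀ g, Cc ρ reps 1 2 g ↔ Cc ρ reps 1 2 (g * u)) → False := by
    intro u hu i1 i2
    have hr := nt ρ reps hfree huniq u 1 u
      (fun g => by rw [mul_one]; exact i1 g)
      (fun g => by rw [g2_sq, mul_one])
      (fun g => by rw [one_mul]; exact i2 g)
    exact hu hr.1
  have nt23 : ∀ u : G2, u ≠ 1 → (∀ g, Cc ρ reps 0 2 g ↔ Cc ρ reps 0 2 (g * u)) →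
      (∀ g, Cc ρ reps 1 2 g ↔ Cc ρ reps 1 2 (g * u)) → False := by
    intro u hu i1 i2
    have hr := nt ρ reps hfree huniq u u 1
      (fun g => by rw [g2_sq, mul_one])
      (fun g => by rw [mul_one]; exact i1 g)
      (fun g => by rw [mul_one]; exact i2 g)
    exact hu hr.2
  have nt4 : ∀ u v : G2, (∀ g, Cc ρ reps 0 1 g ↔ Cc ρ reps 0 1 (g * u)) →
      (∀ g, Cc ρ reps 0 2 g ↔ Cc ρ reps 0 2 (g * v)) →
      (∀ g, Cc ρ reps 1 2 g ↔ Cc ρ reps 1 2 (g * (u * v))) → u = 1 := by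
    intro u v i1 i2 i3
    have hr := nt ρ reps hfree huniq 1 u v
      (fun g => by rw [one_mul]; exact i1 g)
      (fun g => by rw [one_mul]; exact i2 g)
      (fun g => i3 g)
    exact hr.1.symm
  rcases oos 0 1 with ⟨x1, hx1⟩ | ⟨u1, hu1, hi1⟩ <;>
    rcases oos 0 2 with ⟨x2, hx2⟩ | ⟨u2, hu2, hi2⟩ <;>
    rcases oos 1 2 with ⟨x3, hx3⟩ | ⟨u3, hu3, hi3⟩
  · exact witness_odd ρ reps hfree huniq 0 1 2 (by decide) (by decide) (by decide)
      x1 x2 x3 hx1 hx2 hx3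
  · exact witness_stab ρ reps hfree huniq 0 1 2 (by decide) (by decide) (by decide)
      x1 x2 u3 hu3 hx1 hx2 hi3
  · exact witness_stab ρ reps hfree huniq 1 0 2 (by decide) (by decide) (by decide)
      x1 x3 u2 hu2 (symOdd 0 1 x1 hx1) hx3 hi2
  · -- pairs (0,2) and (1,2) have stabilizers u2, u3; pair (0,1) is odd
    refine gamma ρ reps 2 0 1 u2 u3 hu2 hu3 ?_ (symInv 0 2 u2 hi2) ?_ (symInv 1 2 u3 hi3) ?_ x1 hx1
    · intro heq
      exact nt23 u2 hu2 hi2 (by rw [heq]; exact hi3)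
    · intro hcon
      exact nt23 u3 hu3 (symInv 2 0 u3 hcon) hi3
    · intro hcon
      exact nt23 u2 hu2 hi2 (symInv 2 1 u2 hcon)
  · exact witness_stab ρ reps hfree huniq 2 0 1 (by decide) (by decide) (by decide)
      x2 x3 u1 hu1 (symOdd 0 2 x2 hx2) (symOdd 1 2 x3 hx3) hi1
  · -- pairs (0,1) and (1,2) have stabilizers u1, u3; pair (0,2) is odd
    refine gamma ρ reps 1 0 2 u1 u3 hu1 hu3 ?_ (symInv 0 1 u1 hi1) ?_ hi3 ?_ x2 hx2
    · intro heq
      exact nt13 u1 hu1 hi1 (by rw [heq]; exact hi3)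
    · intro hcon
      exact nt13 u3 hu3 (symInv 1 0 u3 hcon) hi3
    · intro hcon
      exact nt13 u1 hu1 hi1 hcon
  · -- pairs (0,1) and (0,2) have stabilizers u1, u2; pair (1,2) is odd
    refine gamma ρ reps 0 1 2 u1 u2 hu1 hu2 ?_ hi1 ?_ hi2 ?_ x3 hx3
    · intro heq
      exact nt12 u1 hu1 hi1 (by rw [heq]; exact hi2)
    · intro hcon
      exact nt12 u2 hu2 hcon hi2
    · intro hcon
      exact nt12 u1 hu1 hi1 hcon
  · -- all three pairs have stabilizers
    have d12 : u1 ≠ u2 := fun h => nt12 u1 hu1 hi1 (by rw [h]; exact hi2)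
    have d13 : u1 ≠ u3 := fun h => nt13 u1 hu1 hi1 (by rw [h]; exact hi3)
    have d23 : u2 ≠ u3 := fun h => nt23 u2 hu2 hi2 (by rw [h]; exact hi3)
    have h3 : u1 * u2 = u3 := third_elt u1 u2 u3 ⟨hu1, hu2, hu3, d12, d13, d23⟩
    exact hu1 (nt4 u1 u2 hi1 hi2 (by rw [h3]; exact hi3))

end Abstract

end KleinAux

/-- The group `ℤ/2ℤ × ℤ/2ℤ` does not admit a semi-regular poset
representation with three orbits. -/
theorem klein_no_three_orbit_semiRegular :
    ¬ HasSemiRegularPosetRep.{0, v} (Multiplicative (ZMod 2 × ZMod 2)) 3 := by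
  rintro ⟨P, instP, ρ, hfree, reps, huniq⟩
  exact KleinAux.master ρ reps hfree huniq
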